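/- Let A be an abelian category and g• : B• → C• any morphism of chain complexes. For each n, let h^{FB}_n : Cok(d^B_{n+1}) → Ker(d^B_{n-1}) and h^{FC}_n : Cok(d^C_{n+1}) → Ker(d^C_{n-1}) be the canonical arrows, let ḡ_n : Cok(d^B_{n+1}) → Cok(d^C_{n+1}) and g̲_n : Ker(d^B_{n-1}) → Ker(d^C_{n-1}) be the arrows induced by g•, let P_n be the pullback of g̲_n along h^{FC}_n, and let h^P_n = ⟨h^{FB}_n, ḡ_n⟩ : Cok(d^B_{n+1}) → P_n. Then there is a long exact sequence ... → H_{n+1}(B•) → H_{n+1}(C•) → Cok(h^P_{n+1}) → H_n(B•) → H_n(C•) → Cok(h^P_n) → ..., where: H_{n+1}(B•) → H_{n+1}(C•) is the arrow induced by g• on homology (identified with the arrow Ker(h^{FB}_{n+1}) → Ker(h^{FC}_{n+1}) induced on kernels); H_{n+1}(C•) ≅ Ker(h^{FC}_{n+1}) → Cok(h^P_{n+1}) is the composite of ⟨0, k⟩ : Ker(h^{FC}_{n+1}) → P_{n+1} with the cokernel projection of h^P_{n+1}; and Cok(h^P_{n+1}) → Cok(h^{FB}_{n+1}) ≅ H_n(B•)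 is induced by the pullback projection P_{n+1} → Ker(d^B_n). -/

import Mathlib

open CategoryTheory CategoryTheory.Limits

noncomputable section

universe v u

variable {A : Type u} [Category.{v} A] [HasZeroMorphisms A] [HasKernels A] [HasCokernels A]

/-- The factorization `C_q ⟶ Ker(d r s)` of the differential `d q r`. -/
def kFac (C : ChainComplex A ℤ) (q r s : ℤ) : C.X q ⟶ kernel (C.d r s) :=
  kernel.lift (C.d r s) (C.d q r) (C.d_comp_d q r s)

/-- The canonical arrow `h^{FC} : Cok(d p q) ⟶ Ker(d r s)` induced by the differential
`d q r` of the complex `C` (for a window `p, q, r, s` of indices): the unique arrow with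
`q^C ≫ h^{FC} ≫ k^C = d q r`. -/
def hSeq (C : ChainComplex A ℤ) (p q r s : ℤ) : cokernel (C.d p q) ⟶ kernel (C.d r s) :=
  cokernel.desc (C.d p q) (kFac C q r s) (by
    rw [← cancel_mono (kernel.ι (C.d r s))]
    simp [kFac])

/-- The canonical connecting arrow `Cok(h^{FC}_{n+1}) ⟶ Ker(h^{FC}_n)` (for a window
`p, q, r, s, t` of indices), the unique arrow `i` with
`cokernel.π ≫ i ≫ kernel.ι = kernel.ι ≫ cokernel.π`. -/
def iSeq (C : ChainComplex A ℤ) (p q r s t : ℤ) :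
    cokernel (hSeq C p q r s) ⟶ kernel (hSeq C q r s t) :=
  kernel.lift (hSeq C q r s t)
    (cokernel.desc (hSeq C p q r s) (kernel.ι (C.d r s) ≫ cokernel.π (C.d q r))
      (by
        ext
        simp [hSeq, kFac]))
    (by
      rw [← cancel_epi (cokernel.π (hSeq C p q r s)), ← cancel_mono (kernel.ι (C.d s t))]
      simp only [Category.assoc, cokernel.π_desc_assoc, comp_zero, zero_comp]
      simp [hSeq, kFac])

/-- The arrow induced by a chain map on the cokernels of the differentials. -/
def cokMap {B C : ChainComplex A ℤ} (g : B ⟶ C) (p q : ℤ) :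
    cokernel (B.d p q) ⟶ cokernel (C.d p q) :=
  cokernel.map (B.d p q) (C.d p q) (g.f p) (g.f q) (g.comm p q).symm

/-- The arrow induced by a chain map on the kernels of the differentials. -/
def kerMap {B C : ChainComplex A ℤ} (g : B ⟶ C) (r s : ℤ) :
    kernel (B.d r s) ⟶ kernel (C.d r s) :=
  kernel.map (B.d r s) (C.d r s) (g.f r) (g.f s) (g.comm r s).symm

/-- Naturality of `hSeq` with respect to chain maps. -/
theorem hSeq_nat {B C : ChainComplex A ℤ} (g : B ⟶ C) (p q r s : ℤ) :
    hSeq B p q r s ≫ kerMap g r s = cokMap g p q ≫ hSeq C p q r s := by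
  ext
  simp [hSeq, kFac, kerMap, cokMap]

section LongSeq
variable [HasPullbacks A] {B C : ChainComplex A ℤ}

/-- The pullback `P n` of `g̲ n : Ker(d^B_{n-1}) ⟶ Ker(d^C_{n-1})` along
`h^{FC}_n : Cok(d^C_{n+1}) ⟶ Ker(d^C_{n-1})`. -/
def Pb (g : B ⟶ C) (n : ℤ) : A :=
  pullback (kerMap g (n-1) (n-2)) (hSeq C (n+1) n (n-1) (n-2))

/-- The comparison `h^P n = ⟨h^{FB}_n, ḡ_n⟩ : Cok(d^B_{n+1}) ⟶ P n`. -/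
def hPb (g : B ⟶ C) (n : ℤ) : cokernel (B.d (n+1) n) ⟶ Pb g n :=
  pullback.lift (hSeq B (n+1) n (n-1) (n-2)) (cokMap g (n+1) n)
    (hSeq_nat g (n+1) n (n-1) (n-2))

/-- `Cok(h^P_n) ⟶ Cok(h^{FB}_n)`, induced by the pullback projection. -/
def CpiPb (g : B ⟶ C) (n : ℤ) :
    cokernel (hPb g n) ⟶ cokernel (hSeq B (n+1) n (n-1) (n-2)) :=
  cokernel.map (hPb g n) (hSeq B (n+1) n (n-1) (n-2)) (𝟙 _)
    (pullback.fst (kerMap g (n-1) (n-2)) (hSeq C (n+1) n (n-1) (n-2))) (by rw [Category.id_comp]; exact pullback.lift_fst ..)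

/-- `δ n : Ker(h^{FC}_n) ⟶ Cok(h^P_n)`, the composite of `⟨0, k⟩` with the cokernel
projection of `h^P_n`. -/
def delPb (g : B ⟶ C) (n : ℤ) :
    kernel (hSeq C (n+1) n (n-1) (n-2)) ⟶ cokernel (hPb g n) :=
  pullback.lift 0 (kernel.ι (hSeq C (n+1) n (n-1) (n-2))) (by simp) ≫ cokernel.π (hPb g n)

/-- The arrow induced by `g` on homology, in the kernel representation
`H_n ≅ Ker(h^{F}_n)`. -/
def Kg (g : B ⟶ C) (p q r s : ℤ) : kernel (hSeq B p q r s) ⟶ kernel (hSeq C p q r s) :=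
  kernel.map (hSeq B p q r s) (hSeq C p q r s) (cokMap g p q) (kerMap g r s)
    (hSeq_nat g p q r s)

end LongSeq

section Aux

open CategoryTheory.Abelian
attribute [local instance] CategoryTheory.Abelian.Pseudoelement.objectToSort
  CategoryTheory.Abelian.Pseudoelement.homToFun
open CategoryTheory.Abelian.Pseudoelement

variable {A : Type u} [Category.{v} A] [Abelian A]

lemma exactKerAux {X Y : A} (f : X ⟶ Y) :
    (ShortComplex.mk (kernel.ι f) f (kernel.condition f)).Exact :=
  ShortComplex.exact_of_f_is_kernel _ (kernelIsKernel f)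

lemma exactCokAux {X Y : A} (f : X ⟶ Y) :
    (ShortComplex.mk f (cokernel.π f) (cokernel.condition f)).Exact :=
  ShortComplex.exact_of_g_is_cokernel _ (cokernelIsCokernel f)

lemma pseudoKer {X Y : A} (f : X ⟶ Y) (b : Pseudoelement X) (hb : f b = 0) :
    ∃ a : Pseudoelement (kernel f), (kernel.ι f) a = b :=
  pseudo_exact_of_exact (exactKerAux f) b hb

lemma pseudoCok {X Y : A} (f : X ⟶ Y) (b : Pseudoelement Y) (hb : (cokernel.π f) b = 0) :
    ∃ a : Pseudoelement X, f a = b :=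
  pseudo_exact_of_exact (exactCokAux f) b hb

lemma hSeq_fac (X : ChainComplex A ℤ) (p q r s : ℤ) :
    cokernel.π (X.d p q) ≫ hSeq X p q r s ≫ kernel.ι (X.d r s) = X.d q r := by
  simp [hSeq, kFac]

lemma iSeq_fac (X : ChainComplex A ℤ) (p q r s t : ℤ) :
    cokernel.π (hSeq X p q r s) ≫ iSeq X p q r s t ≫ kernel.ι (hSeq X q r s t) =
      kernel.ι (X.d r s) ≫ cokernel.π (X.d q r) := by
  simp [iSeq]

lemma iSeq_mono (X : ChainComplex A ℤ) (p q r s t : ℤ) : Mono (iSeq X p q r s t) := by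
  apply mono_of_zero_of_map_zero
  intro c hc
  obtain ⟨k, hk⟩ := pseudo_surjective_of_epi (cokernel.π (hSeq X p q r s)) c
  have h1 : (cokernel.π (X.d q r)) ((kernel.ι (X.d r s)) k) = 0 := by
    rw [← Pseudoelement.comp_apply, ← iSeq_fac X p q r s t, Pseudoelement.comp_apply, Pseudoelement.comp_apply, hk, hc, apply_zero]
  obtain ⟨u, hu⟩ := pseudoCok (X.d q r) _ h1
  have h2 : (hSeq X p q r s) ((cokernel.π (X.d p q)) u) = k := by
    apply pseudo_injective_of_mono (kernel.ι (X.d r s))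
    rw [← Pseudoelement.comp_apply, ← Pseudoelement.comp_apply, hSeq_fac, hu]
  rw [← hk, ← h2, ← Pseudoelement.comp_apply, cokernel.condition, Pseudoelement.zero_apply]

lemma iSeq_epi (X : ChainComplex A ℤ) (p q r s t : ℤ) : Epi (iSeq X p q r s t) := by
  apply epi_of_pseudo_surjective
  intro y
  obtain ⟨x, hx⟩ := pseudo_surjective_of_epi (cokernel.π (X.d q r))
    ((kernel.ι (hSeq X q r s t)) y)
  have e0 : (hSeq X q r s t) ((kernel.ι (hSeq X q r s t)) y) = 0 := by
    rw [← Pseudoelement.comp_apply, kernel.condition, Pseudoelement.zero_apply]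
  have e1 : (X.d r s) x
      = (kernel.ι (X.d s t)) ((hSeq X q r s t) ((cokernel.π (X.d q r)) x)) := by
    rw [← Pseudoelement.comp_apply, ← Pseudoelement.comp_apply, hSeq_fac X q r s t]
  have h1 : (X.d r s) x = 0 := by
    rw [e1, hx, e0, apply_zero]
  obtain ⟨k, hk⟩ := pseudoKer (X.d r s) x h1
  refine ⟨(cokernel.π (hSeq X p q r s)) k, ?_⟩
  apply pseudo_injective_of_mono (kernel.ι (hSeq X q r s t))
  rw [← Pseudoelement.comp_apply, ← Pseudoelement.comp_apply, iSeq_fac, Pseudoelement.comp_apply, hk, hx]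

end Aux

section Main
attribute [local instance] CategoryTheory.Abelian.Pseudoelement.objectToSort
  CategoryTheory.Abelian.Pseudoelement.homToFun
set_option maxHeartbeats 2000000

/-- **Statement 14** (The long exact sequence associated with any morphism of chain
complexes in an abelian category):
`⋯ ⟶ H_{n+1}(B) ⟶ H_{n+1}(C) ⟶ Cok(h^P_{n+1}) ⟶ H_n(B) ⟶ H_n(C) ⟶ Cok(h^P_n) ⟶ ⋯`,
where homology is represented as `H_m(X) = Ker(h^{FX}_m)`, the map `H ⟶ H` is induced
by `g`, the map `H_n(C) ⟶ Cok(h^P_n)` is `δ n`, and the map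
`Cok(h^P_n) ⟶ H_{n-1}(B)` is induced by the pullback projection followed by the
canonical identification `Cok(h^{FB}_n) ≅ Ker(h^{FB}_{n-1})`. -/
theorem long_exact_sequence_of_chain_map
    (A : Type u) [Category.{v} A] [Abelian A]
    (B C : ChainComplex A ℤ) (g : B ⟶ C) :
    ∀ n : ℤ,
      (∃ w : Kg g (n+1) n (n-1) (n-2) ≫ delPb g n = 0, (ShortComplex.mk _ _ w).Exact) ∧
      (∃ w : delPb g n ≫ (CpiPb g n ≫ iSeq B (n+1) n (n-1) (n-2) (n-3)) = 0,
          (ShortComplex.mk _ _ w).Exact) ∧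
      (∃ w : (CpiPb g n ≫ iSeq B (n+1) n (n-1) (n-2) (n-3)) ≫ Kg g n (n-1) (n-2) (n-3) = 0,
          (ShortComplex.mk _ _ w).Exact) := by
  
  intro n
  -- notation-heavy abbreviations via morphism-level equations
  have m1 : Kg g (n+1) n (n-1) (n-2) ≫ kernel.ι (hSeq C (n+1) n (n-1) (n-2))
      = kernel.ι (hSeq B (n+1) n (n-1) (n-2)) ≫ cokMap g (n+1) n := by
    simp [Kg]
  have m2 : cokMap g (n+1) n
      = hPb g n ≫ pullback.snd (kerMap g (n-1) (n-2)) (hSeq C (n+1) n (n-1) (n-2)) := by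
    exact (pullback.lift_snd ..).symm
  have m3 : cokernel.π (hPb g n) ≫ CpiPb g n
      = pullback.fst (kerMap g (n-1) (n-2)) (hSeq C (n+1) n (n-1) (n-2))
        ≫ cokernel.π (hSeq B (n+1) n (n-1) (n-2)) := by
    exact cokernel.π_desc ..
  have m4 : hPb g n ≫ pullback.fst (kerMap g (n-1) (n-2)) (hSeq C (n+1) n (n-1) (n-2))
      = hSeq B (n+1) n (n-1) (n-2) := by
    exact pullback.lift_fst ..
  have mKg' : Kg g n (n-1) (n-2) (n-3) ≫ kernel.ι (hSeq C n (n-1) (n-2) (n-3))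
      = kernel.ι (hSeq B n (n-1) (n-2) (n-3)) ≫ cokMap g n (n-1) := by
    simp [Kg]
  have m8 : cokernel.π (B.d n (n-1)) ≫ cokMap g n (n-1)
      = g.f (n-1) ≫ cokernel.π (C.d n (n-1)) := by
    simp [cokMap]
  have m9 : kernel.ι (B.d (n-1) (n-2)) ≫ g.f (n-1)
      = kerMap g (n-1) (n-2) ≫ kernel.ι (C.d (n-1) (n-2)) := by
    simp [kerMap]
  have m6 : hSeq C (n+1) n (n-1) (n-2) ≫ kernel.ι (C.d (n-1) (n-2)) ≫ cokernel.π (C.d n (n-1))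
      = 0 := by
    rw [← cancel_epi (cokernel.π (C.d (n+1) n)), comp_zero,
      reassoc_of% (hSeq_fac C (n+1) n (n-1) (n-2)), cokernel.condition]
  -- the three vanishing conditions
  have KgL : Kg g (n+1) n (n-1) (n-2) ≫ pullback.lift
        (0 : kernel (hSeq C (n+1) n (n-1) (n-2)) ⟶ kernel (B.d (n-1) (n-2)))
        (kernel.ι (hSeq C (n+1) n (n-1) (n-2))) (by simp)
      = kernel.ι (hSeq B (n+1) n (n-1) (n-2)) ≫ hPb g n := by
    apply pullback.hom_ext
    · simp only [Category.assoc]; erw [pullback.lift_fst]; refine Eq.trans ?_ (Category.assoc _ _ _).symm; erw [m4]; simp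
    · simp only [Category.assoc]; erw [pullback.lift_snd]; refine Eq.trans ?_ (Category.assoc _ _ _).symm; erw [← m2]; exact m1
  have w1 : Kg g (n+1) n (n-1) (n-2) ≫ delPb g n = 0 := by
    simp only [delPb]
    erw [← Category.assoc, KgL, Category.assoc, cokernel.condition, comp_zero]
  have w2' : delPb g n ≫ CpiPb g n = 0 := by
    simp only [delPb]
    erw [Category.assoc, m3, ← Category.assoc, pullback.lift_fst, zero_comp]
  have w2 : delPb g n ≫ (CpiPb g n ≫ iSeq B (n+1) n (n-1) (n-2) (n-3)) = 0 := by
    rw [← Category.assoc, w2', zero_comp]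
  have w3 : (CpiPb g n ≫ iSeq B (n+1) n (n-1) (n-2) (n-3)) ≫ Kg g n (n-1) (n-2) (n-3) = 0 := by
    rw [← cancel_epi (cokernel.π (hPb g n)), comp_zero,
      ← cancel_mono (kernel.ι (hSeq C n (n-1) (n-2) (n-3))), zero_comp]
    simp only [Category.assoc]
    erw [reassoc_of% m3, mKg']
    refine (Category.assoc _ _ _).trans ?_
    erw [reassoc_of% (iSeq_fac B (n+1) n (n-1) (n-2) (n-3)), m8,
      reassoc_of% m9, pullback.condition_assoc, m6, comp_zero]
    rfl
  refine ⟨⟨w1, ?_⟩, ⟨w2, ?_⟩, ⟨w3, ?_⟩⟩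
  -- Exactness at H_n(C)
  · apply Abelian.Pseudoelement.exact_of_pseudo_exact
    intro x hx
    change (delPb g n) x = 0 at hx
    show ∃ a, (Kg g (n+1) n (n-1) (n-2)) a = x
    simp only [delPb] at hx
    erw [Abelian.Pseudoelement.comp_apply] at hx
    obtain ⟨b, hb⟩ := pseudoCok (hPb g n) _ hx
    have e := congrArg (Abelian.Pseudoelement.pseudoApply
      (pullback.fst (kerMap g (n-1) (n-2)) (hSeq C (n+1) n (n-1) (n-2)))) hb
    erw [← Abelian.Pseudoelement.comp_apply] at e
    erw [← Abelian.Pseudoelement.comp_apply, m4, pullback.lift_fst] at e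
    rw [Abelian.Pseudoelement.zero_apply] at e
    obtain ⟨y, hy⟩ := pseudoKer _ b e
    refine ⟨y, ?_⟩
    apply Abelian.Pseudoelement.pseudo_injective_of_mono (kernel.ι (hSeq C (n+1) n (n-1) (n-2)))
    have e3 := congrArg (Abelian.Pseudoelement.pseudoApply
      (pullback.snd (kerMap g (n-1) (n-2)) (hSeq C (n+1) n (n-1) (n-2)))) hb
    erw [← Abelian.Pseudoelement.comp_apply, ← Abelian.Pseudoelement.comp_apply] at e3
    rw [pullback.lift_snd] at e3
    rw [← Abelian.Pseudoelement.comp_apply, m1, Abelian.Pseudoelement.comp_apply, hy, m2]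
    exact e3
  -- Exactness at Cok(h^P n)
  · apply Abelian.Pseudoelement.exact_of_pseudo_exact
    intro ξ hξ
    change (CpiPb g n ≫ iSeq B (n+1) n (n-1) (n-2) (n-3)) ξ = 0 at hξ
    show ∃ a, (delPb g n) a = ξ
    haveI := iSeq_mono B (n+1) n (n-1) (n-2) (n-3)
    rw [Abelian.Pseudoelement.comp_apply] at hξ
    have hξ' : (CpiPb g n) ξ = 0 := by
      apply Abelian.Pseudoelement.zero_of_map_zero _
        (Abelian.Pseudoelement.pseudo_injective_of_mono (iSeq B (n+1) n (n-1) (n-2) (n-3))) _ hξ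
    obtain ⟨pp, hpp⟩ := Abelian.Pseudoelement.pseudo_surjective_of_epi (cokernel.π (hPb g n)) ξ
    have h1 : (cokernel.π (hSeq B (n+1) n (n-1) (n-2)))
        ((pullback.fst (kerMap g (n-1) (n-2)) (hSeq C (n+1) n (n-1) (n-2))) pp) = 0 := by
      erw [← Abelian.Pseudoelement.comp_apply, ← m3, Abelian.Pseudoelement.comp_apply, hpp]
      exact hξ'
    obtain ⟨b, hb⟩ := pseudoCok (hSeq B (n+1) n (n-1) (n-2)) _ h1
    have hfst2 : (pullback.fst (kerMap g (n-1) (n-2)) (hSeq C (n+1) n (n-1) (n-2)))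
        ((hPb g n) b)
        = (pullback.fst (kerMap g (n-1) (n-2)) (hSeq C (n+1) n (n-1) (n-2))) pp := by
      erw [← Abelian.Pseudoelement.comp_apply, m4, hb]
    obtain ⟨z, hz0, hzg⟩ := Abelian.Pseudoelement.sub_of_eq_image
      (pullback.fst (kerMap g (n-1) (n-2)) (hSeq C (n+1) n (n-1) (n-2))) pp ((hPb g n) b)
      hfst2.symm
    have hπz : (cokernel.π (hPb g n)) z = ξ := by
      have h2 : (cokernel.π (hPb g n)) ((hPb g n) b) = 0 := by
        rw [← Abelian.Pseudoelement.comp_apply, cokernel.condition, Abelian.Pseudoelement.zero_apply]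
      erw [hzg _ _ h2, hpp]
    obtain ⟨z', hz'⟩ := pseudoKer
      (pullback.fst (kerMap g (n-1) (n-2)) (hSeq C (n+1) n (n-1) (n-2))) z hz0
    refine ⟨(kernel.lift (hSeq C (n+1) n (n-1) (n-2))
      (kernel.ι (pullback.fst (kerMap g (n-1) (n-2)) (hSeq C (n+1) n (n-1) (n-2)))
        ≫ pullback.snd (kerMap g (n-1) (n-2)) (hSeq C (n+1) n (n-1) (n-2)))
      (by rw [Category.assoc, ← pullback.condition, ← Category.assoc,
        kernel.condition, zero_comp])) z', ?_⟩
    have m5 : (kernel.lift (hSeq C (n+1) n (n-1) (n-2))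
        (kernel.ι (pullback.fst (kerMap g (n-1) (n-2)) (hSeq C (n+1) n (n-1) (n-2)))
          ≫ pullback.snd (kerMap g (n-1) (n-2)) (hSeq C (n+1) n (n-1) (n-2)))
        (by rw [Category.assoc, ← pullback.condition, ← Category.assoc,
          kernel.condition, zero_comp])) ≫ delPb g n
        = kernel.ι (pullback.fst (kerMap g (n-1) (n-2)) (hSeq C (n+1) n (n-1) (n-2)))
          ≫ cokernel.π (hPb g n) := by
      simp only [delPb]
      refine (Category.assoc _ _ _).symm.trans ?_
      congr 1
      apply pullback.hom_ext
      · simp only [Category.assoc]; erw [pullback.lift_fst]; simp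
      · simp only [Category.assoc]; erw [pullback.lift_snd]; simp
    erw [← Abelian.Pseudoelement.comp_apply, m5, Abelian.Pseudoelement.comp_apply, hz', hπz]
  -- Exactness at H_{n-1}(B)
  · apply Abelian.Pseudoelement.exact_of_pseudo_exact
    intro y hy
    change (Kg g n (n-1) (n-2) (n-3)) y = 0 at hy
    show ∃ a, (CpiPb g n ≫ iSeq B (n+1) n (n-1) (n-2) (n-3)) a = y
    haveI := iSeq_epi B (n+1) n (n-1) (n-2) (n-3)
    obtain ⟨c, hc⟩ := Abelian.Pseudoelement.pseudo_surjective_of_epi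
      (iSeq B (n+1) n (n-1) (n-2) (n-3)) y
    obtain ⟨k, hk⟩ := Abelian.Pseudoelement.pseudo_surjective_of_epi
      (cokernel.π (hSeq B (n+1) n (n-1) (n-2))) c
    have hyι : (cokMap g n (n-1)) ((kernel.ι (hSeq B n (n-1) (n-2) (n-3))) y) = 0 := by
      have h0 : (kernel.ι (hSeq C n (n-1) (n-2) (n-3))) ((Kg g n (n-1) (n-2) (n-3)) y) = 0 := by
        rw [hy, Abelian.Pseudoelement.apply_zero]
      rw [← Abelian.Pseudoelement.comp_apply, mKg', Abelian.Pseudoelement.comp_apply] at h0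
      exact h0
    have hιy : (kernel.ι (hSeq B n (n-1) (n-2) (n-3))) y
        = (cokernel.π (B.d n (n-1))) ((kernel.ι (B.d (n-1) (n-2))) k) := by
      rw [← hc, ← hk, ← Abelian.Pseudoelement.comp_apply, ← Abelian.Pseudoelement.comp_apply,
        iSeq_fac, Abelian.Pseudoelement.comp_apply]
    have h3 : (cokernel.π (C.d n (n-1))) ((g.f (n-1)) ((kernel.ι (B.d (n-1) (n-2))) k)) = 0 := by
      rw [← Abelian.Pseudoelement.comp_apply, ← m8, Abelian.Pseudoelement.comp_apply, ← hιy]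
      exact hyι
    obtain ⟨u, hu⟩ := pseudoCok (C.d n (n-1)) _ h3
    have h4 : (kernel.ι (C.d (n-1) (n-2))) ((kerMap g (n-1) (n-2)) k)
        = (g.f (n-1)) ((kernel.ι (B.d (n-1) (n-2))) k) := by
      rw [← Abelian.Pseudoelement.comp_apply, ← m9, Abelian.Pseudoelement.comp_apply]
    have h5 : (hSeq C (n+1) n (n-1) (n-2)) ((cokernel.π (C.d (n+1) n)) u)
        = (kerMap g (n-1) (n-2)) k := by
      apply Abelian.Pseudoelement.pseudo_injective_of_mono (kernel.ι (C.d (n-1) (n-2)))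
      rw [← Abelian.Pseudoelement.comp_apply, ← Abelian.Pseudoelement.comp_apply, hSeq_fac, hu, h4]
    obtain ⟨pp, hp1, hp2⟩ := Abelian.Pseudoelement.pseudo_pullback (f := kerMap g (n-1) (n-2))
      (g := hSeq C (n+1) n (n-1) (n-2)) (p := k) (q := (cokernel.π (C.d (n+1) n)) u) h5.symm
    refine ⟨(cokernel.π (hPb g n)) pp, ?_⟩
    have h6 : (CpiPb g n) ((cokernel.π (hPb g n)) pp) = c := by
      erw [← Abelian.Pseudoelement.comp_apply, m3, Abelian.Pseudoelement.comp_apply, hp1, hk]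
    rw [Abelian.Pseudoelement.comp_apply, h6, hc]

end Main
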